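/- Let G be a compact topological group whose topology is induced by a metric d. Let (H_j) be a sequence of subgroups of G, regarded as nonempty subsets, and let A ⊆ G be a nonempty closed subset such that the Hausdorff distance between H_j and A tends to 0 as j → ∞. Then A is a subgroup of G: the identity element 1 belongs to A, and for all a, b ∈ A one has a·b ∈ A and a⁻¹ ∈ A. -/

import Mathlib

open Filter

/-- In a compact metrizable topological group, a nonempty closed set which is the
limit in Hausdorff distance of a sequence of subgroups is itself a subgroup. -/
theorem closed_hausdorff_limit_of_subgroups_is_subgroup {G : Type*} [Group G]
    [MetricSpace G] [IsTopologicalGroup G] [CompactSpace G]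
    (H : ℕ → Subgroup G) (A : Set G) (hA : A.Nonempty) (hAclosed : IsClosed A)
    (hconv : Tendsto (fun j => Metric.hausdorffDist ((H j : Set G)) A) atTop (nhds 0)) :
    (1 : G) ∈ A ∧ ∀ a ∈ A, ∀ b ∈ A, a * b ∈ A ∧ a⁻¹ ∈ A := by
  have hfin : ∀ j, EMetric.hausdorffEdist ((H j : Set G)) A ≠ ⊤ := fun j =>
    Metric.hausdorffEdist_ne_top_of_nonempty_of_bounded ⟨1, (H j).one_mem⟩ hA
      ((isCompact_univ.isBounded).subset (Set.subset_univ _))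
      ((isCompact_univ.isBounded).subset (Set.subset_univ _))
  -- key lemma: a limit of points of H j lies in A
  have key : ∀ (u : ℕ → G) (x : G), (∀ j, u j ∈ H j) → Tendsto u atTop (nhds x) → x ∈ A := by
    intro u x hu hux
    have h1 : Tendsto (fun j => Metric.infDist (u j) A) atTop (nhds (Metric.infDist x A)) :=
      (Metric.continuous_infDist_pt A).continuousAt.tendsto.comp hux
    have h2 : Tendsto (fun j => Metric.infDist (u j) A) atTop (nhds 0) := by
      apply squeeze_zero (fun j => Metric.infDist_nonneg)
        (fun j => Metric.infDist_le_hausdorffDist_of_mem (hu j) (hfin j)) hconv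
    have hx0 : Metric.infDist x A = 0 := tendsto_nhds_unique h1 h2
    exact (hAclosed.mem_iff_infDist_zero hA).2 hx0
  -- approximating sequences for elements of A
  have approx : ∀ a ∈ A, ∃ u : ℕ → G, (∀ j, u j ∈ H j) ∧ Tendsto u atTop (nhds a) := by
    intro a ha
    have hsel : ∀ j : ℕ, ∃ y ∈ (H j : Set G),
        dist a y < Metric.hausdorffDist ((H j : Set G)) A + 1 / (j + 1) := by
      intro j
      have hlt : Metric.hausdorffDist A ((H j : Set G)) <
          Metric.hausdorffDist ((H j : Set G)) A + 1 / (j + 1) := by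
        rw [Metric.hausdorffDist_comm]
        have : (0 : ℝ) < 1 / (j + 1) := by positivity
        linarith
      exact Metric.exists_dist_lt_of_hausdorffDist_lt ha hlt
        (by rw [EMetric.hausdorffEdist_comm]; exact hfin j)
    choose u hu hdu using hsel
    refine ⟨u, hu, ?_⟩
    rw [tendsto_iff_dist_tendsto_zero]
    have hlim : Tendsto (fun j : ℕ =>
        Metric.hausdorffDist ((H j : Set G)) A + 1 / (j + 1)) atTop (nhds 0) := by
      have h2 : Tendsto (fun j : ℕ => (1 : ℝ) / (j + 1)) atTop (nhds 0) :=
        tendsto_one_div_add_atTop_nhds_zero_nat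
      simpa using hconv.add h2
    exact squeeze_zero (fun j => dist_nonneg)
      (fun j => by rw [dist_comm]; exact (hdu j).le) hlim
  constructor
  · exact key (fun _ => 1) 1 (fun j => (H j).one_mem) tendsto_const_nhds
  · intro a ha b hb
    obtain ⟨u, hu, hua⟩ := approx a ha
    obtain ⟨v, hv, hvb⟩ := approx b hb
    constructor
    · exact key (fun j => u j * v j) (a * b) (fun j => (H j).mul_mem (hu j) (hv j))
        (hua.mul hvb)
    · exact key (fun j => (u j)⁻¹) a⁻¹ (fun j => (H j).inv_mem (hu j)) hua.inv
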